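/- Suppose A ∈ Rⁿˣⁿ is diagonally stable, i.e., there exists a positive diagonal matrix P with AᵀP + PA negative definite. If x* ∈ Rⁿ has strictly positive entries and satisfies r + A x* = 0, then the function V(x) = 2 Σᵢ pᵢ (xᵢ − x*ᵢ − x*ᵢ log(xᵢ/x*ᵢ)), defined on the positive orthant, satisfies: V(x) ≥ 0 with equality iff x = x*, and its derivative along solutions of ẋ = diag(x)(r + Ax) equals (x − x*)ᵀ(AᵀP + PA)(x − x*), hence is negative for x ≠ x*. -/

import Mathlib

open Matrix

lemma quad {n : ℕ} (A : Matrix (Fin n) (Fin n) ℝ) (p v : Fin n → ℝ) :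
    v ⬝ᵥ ((Aᵀ * Matrix.diagonal p + Matrix.diagonal p * A).mulVec v)
      = 2 * ∑ i, p i * v i * ∑ j, A i j * v j := by
  simp only [Matrix.add_apply, Matrix.mul_diagonal, Matrix.diagonal_mul,
    Matrix.transpose_apply, dotProduct, Matrix.mulVec, add_mul,
    Finset.sum_add_distrib, Finset.mul_sum, mul_add]
  rw [Finset.sum_comm, ← Finset.sum_add_distrib]
  refine Finset.sum_congr rfl fun i _ => ?_
  rw [← Finset.sum_add_distrib]
  exact Finset.sum_congr rfl fun j _ => by ring

lemma term_nonneg {a b : ℝ} (ha : 0 < a) (hb : 0 < b) :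
    0 ≤ a - b - b * Real.log (a / b) := by
  have h := Real.log_le_sub_one_of_pos (div_pos ha hb)
  nlinarith [mul_le_mul_of_nonneg_left h hb.le, mul_div_cancel₀ a hb.ne']

lemma term_pos {a b : ℝ} (ha : 0 < a) (hb : 0 < b) (hne : a ≠ b) :
    0 < a - b - b * Real.log (a / b) := by
  have hab : a / b ≠ 1 := by
    intro h; exact hne (by field_simp at h; linarith)
  have h := Real.log_lt_sub_one_of_pos (div_pos ha hb) hab
  nlinarith [mul_lt_mul_of_pos_left h hb, mul_div_cancel₀ a hb.ne']

/-- Goh's Lyapunov function for diagonally stable GLV systems: with positive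
diagonal `P = diag p` such that `AᵀP + PA` is negative definite and interior
equilibrium `x*` (`r + A x* = 0`), the function
`V(x) = 2 Σᵢ pᵢ(xᵢ − x*ᵢ − x*ᵢ log(xᵢ/x*ᵢ))` is nonnegative on the positive
orthant, vanishes exactly at `x*`, its derivative along solutions of
`ẋ = diag(x)(r + Ax)` equals `(x−x*)ᵀ(AᵀP+PA)(x−x*)`, which is negative for `x ≠ x*`. -/
theorem glv_goh_lyapunov {n : ℕ}
    (A : Matrix (Fin n) (Fin n) ℝ) (r : Fin n → ℝ)
    (p : Fin n → ℝ) (hp : ∀ i, 0 < p i)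
    (hstab : ∀ v : Fin n → ℝ, v ≠ 0 →
      v ⬝ᵥ ((Aᵀ * Matrix.diagonal p + Matrix.diagonal p * A).mulVec v) < 0)
    (xs : Fin n → ℝ) (hxs : ∀ i, 0 < xs i) (heq : r + A.mulVec xs = 0) :
    let V : (Fin n → ℝ) → ℝ :=
      fun x => 2 * ∑ i, p i * (x i - xs i - xs i * Real.log (x i / xs i))
    (∀ x : Fin n → ℝ, (∀ i, 0 < x i) → 0 ≤ V x) ∧
    (∀ x : Fin n → ℝ, (∀ i, 0 < x i) → (V x = 0 ↔ x = xs)) ∧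
    (∀ (x : ℝ → Fin n → ℝ) (t : ℝ), (∀ s i, 0 < x s i) →
      (∀ i, HasDerivAt (fun s => x s i) (x t i * (r i + ∑ j, A i j * x t j)) t) →
      HasDerivAt (fun s => V (x s))
        ((x t - xs) ⬝ᵥ ((Aᵀ * Matrix.diagonal p + Matrix.diagonal p * A).mulVec
          (x t - xs))) t) ∧
    (∀ x : Fin n → ℝ, x ≠ xs →
      (x - xs) ⬝ᵥ ((Aᵀ * Matrix.diagonal p + Matrix.diagonal p * A).mulVec (x - xs)) < 0) := by
  intro V
  have hterm : ∀ (x : Fin n → ℝ), (∀ i, 0 < x i) → ∀ i,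
      0 ≤ p i * (x i - xs i - xs i * Real.log (x i / xs i)) :=
    fun x hx i => mul_nonneg (hp i).le (term_nonneg (hx i) (hxs i))
  refine ⟨?_, ?_, ?_, ?_⟩
  · intro x hx
    have : 0 ≤ ∑ i, p i * (x i - xs i - xs i * Real.log (x i / xs i)) :=
      Finset.sum_nonneg fun i _ => hterm x hx i
    simpa [V] using by linarith
  · intro x hx
    constructor
    · intro h0
      have hsum : ∑ i, p i * (x i - xs i - xs i * Real.log (x i / xs i)) = 0 := by
        simp only [V] at h0; linarith
      funext i
      by_contra hne
      have hlt : 0 < p i * (x i - xs i - xs i * Real.log (x i / xs i)) :=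
        mul_pos (hp i) (term_pos (hx i) (hxs i) hne)
      have hgt : 0 < ∑ j, p j * (x j - xs j - xs j * Real.log (x j / xs j)) := by
        calc 0 < p i * (x i - xs i - xs i * Real.log (x i / xs i)) := hlt
        _ ≤ _ := Finset.single_le_sum (fun j _ => hterm x hx j) (Finset.mem_univ i)
      linarith
    · intro h; subst h
      have hz : ∀ i, Real.log (x i / x i) = 0 := fun i => by
        rw [div_self (hx i).ne', Real.log_one]
      simp [V, hz]
  · intro x t hpos hx'
    set v : Fin n → ℝ := x t - xs with hv
    have hg : ∀ i, r i + ∑ j, A i j * x t j = ∑ j, A i j * v j := by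
      intro i
      have hr := congrFun heq i
      simp only [Pi.add_apply, Matrix.mulVec, dotProduct, Pi.zero_apply] at hr
      simp only [hv, Pi.sub_apply, mul_sub, Finset.sum_sub_distrib]
      linarith
    have hd : ∀ i, HasDerivAt
        (fun s => p i * (x s i - xs i - xs i * Real.log (x s i / xs i)))
        (p i * (v i * ∑ j, A i j * v j)) t := by
      intro i
      have hxne : x t i ≠ 0 := (hpos t i).ne'
      have hlog : HasDerivAt (fun s => Real.log (x s i))
          ((x t i * (r i + ∑ j, A i j * x t j)) / x t i) t := (hx' i).log hxne
      have h1 : HasDerivAt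
          (fun s => x s i - xs i - xs i * (Real.log (x s i) - Real.log (xs i)))
          ((x t i * (r i + ∑ j, A i j * x t j))
            - xs i * ((x t i * (r i + ∑ j, A i j * x t j)) / x t i)) t := by
        have := ((hx' i).sub_const (xs i)).sub
          (((hlog.sub_const (Real.log (xs i))).const_mul (xs i)))
        exact this
      have h2 : HasDerivAt
          (fun s => x s i - xs i - xs i * Real.log (x s i / xs i))
          ((x t i * (r i + ∑ j, A i j * x t j))
            - xs i * ((x t i * (r i + ∑ j, A i j * x t j)) / x t i)) t := by
        refine h1.congr_of_eventuallyEq (Filter.Eventually.of_forall fun s => ?_)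
        simp only [Real.log_div (hpos s i).ne' (hxs i).ne']
      have h3 := h2.const_mul (p i)
      refine h3.congr_deriv ?_
      rw [mul_div_cancel_left₀ _ hxne, hg i]
      have hvi : v i = x t i - xs i := rfl
      rw [hvi]; ring
    have hsum : HasDerivAt (fun s => ∑ i, p i * (x s i - xs i - xs i * Real.log (x s i / xs i)))
        (∑ i, p i * (v i * ∑ j, A i j * v j)) t :=
      HasDerivAt.fun_sum fun i _ => hd i
    have hV := hsum.const_mul (2 : ℝ)
    have : v ⬝ᵥ ((Aᵀ * Matrix.diagonal p + Matrix.diagonal p * A).mulVec v)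
        = 2 * ∑ i, p i * (v i * ∑ j, A i j * v j) := by
      rw [quad]
      congr 1
      exact Finset.sum_congr rfl fun i _ => by ring
    simp only [V]
    rw [this]
    exact hV
  · intro x hx
    exact hstab _ (sub_ne_zero.mpr hx)
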